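/- If f : (0, ∞) → ℝ is continuous and for every x > 0 the sequence f(n·x) tends to 0 as n → ∞ (n ranging over positive integers), then f(x) → 0 as x → ∞. -/

import Mathlib

open Filter Set Metric

theorem croft_original (f : ℝ → ℝ) (hf : ContinuousOn f (Set.Ioi (0:ℝ)))
    (h : ∀ x > (0:ℝ), Filter.Tendsto (fun n : ℕ => f (n * x)) Filter.atTop (nhds 0)) :
    Filter.Tendsto f Filter.atTop (nhds 0) := by
  rw [Metric.tendsto_atTop]
  intro ε hε
  set E : ℕ → Set ℝ :=
    fun N => {x : ℝ | 1 ≤ x ∧ ∀ n : ℕ, N + 1 ≤ n → |f (n * x)| ≤ ε/2} with hEdef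
  -- each E N is closed
  have hEclosed : ∀ N, IsClosed (E N) := by
    intro N
    have hC : ∀ n : ℕ, 1 ≤ n → IsClosed {x : ℝ | 1 ≤ x ∧ |f (n * x)| ≤ ε/2} := by
      intro n hn
      have hcont : ContinuousOn (fun x : ℝ => |f ((n : ℝ) * x)|) (Ici 1) := by
        apply ContinuousOn.abs
        apply hf.comp (continuous_const.mul continuous_id).continuousOn
        intro x hx
        have hn1 : (1:ℝ) ≤ (n:ℝ) := by exact_mod_cast hn
        have hx1 : (1:ℝ) ≤ x := hx
        simp only [id, mem_Ioi, Pi.mul_apply]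
        nlinarith
      have heq : {x : ℝ | 1 ≤ x ∧ |f ((n:ℝ) * x)| ≤ ε/2}
          = Ici 1 ∩ (fun x : ℝ => |f ((n:ℝ)*x)|) ⁻¹' (Iic (ε/2)) := by
        ext x; simp [mem_Ici, mem_Iic]
      rw [heq]
      exact hcont.preimage_isClosed_of_isClosed isClosed_Ici isClosed_Iic
    have heq : E N = ⋂ n ∈ {n : ℕ | N + 1 ≤ n}, {x : ℝ | 1 ≤ x ∧ |f ((n:ℝ) * x)| ≤ ε/2} := by
      ext x
      simp only [hEdef, mem_setOf_eq, mem_iInter]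
      constructor
      · rintro ⟨hx1, hx2⟩ n hn
        exact ⟨hx1, hx2 n hn⟩
      · intro hx
        have h0 := hx (N+1) (le_refl _)
        exact ⟨h0.1, fun n hn => (hx n hn).2⟩
    rw [heq]
    exact isClosed_biInter (fun n hn => hC n (le_trans (Nat.succ_le_succ (Nat.zero_le N)) hn))
  -- the E N cover [1, ∞)
  have hmem : ∀ z : ℝ, 1 ≤ z → ∃ N, z ∈ E N := by
    intro z hz
    have hz0 : (0:ℝ) < z := lt_of_lt_of_le one_pos hz
    have ht := h z hz0
    rw [Metric.tendsto_atTop] at ht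
    obtain ⟨N, hN⟩ := ht (ε/2) (by linarith)
    refine ⟨N, hz, fun n hn => ?_⟩
    have := hN n (le_trans (Nat.le_succ N) hn)
    rw [Real.dist_eq, sub_zero] at this
    exact this.le
  -- Baire category on the subtype [1, ∞)
  haveI : CompleteSpace (Ici (1:ℝ)) := isClosed_Ici.completeSpace_coe
  have baire : ∃ N, (interior ((↑) ⁻¹' E N : Set (Ici (1:ℝ)))).Nonempty := by
    apply nonempty_interior_of_iUnion_of_closed
    · intro N
      exact (hEclosed N).preimage continuous_subtype_val
    · ext z
      simp only [mem_iUnion, mem_univ, iff_true, mem_preimage]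
      exact hmem z z.2
  obtain ⟨N, z, hz⟩ := baire
  obtain ⟨δ, hδ, hball⟩ := Metric.isOpen_iff.mp isOpen_interior z hz
  have key : ∃ a b : ℝ, 1 ≤ a ∧ a < b ∧ ∀ y : ℝ, a ≤ y → y ≤ b → y ∈ E N := by
    refine ⟨(z:ℝ), (z:ℝ) + δ/2, z.2, by linarith, fun y h1 h2 => ?_⟩
    have hy1 : (1:ℝ) ≤ y := le_trans z.2 h1
    have hmemball : (⟨y, hy1⟩ : Ici (1:ℝ)) ∈ ball z δ := by
      rw [mem_ball, Subtype.dist_eq, Real.dist_eq, abs_lt]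
      constructor <;> linarith
    have h' : (⟨y, hy1⟩ : Ici (1:ℝ)) ∈ (Subtype.val ⁻¹' E N : Set (Ici (1:ℝ))) :=
      interior_subset (hball hmemball)
    exact h'
  obtain ⟨a, b, ha1, hab, hIcc⟩ := key
  have ha0 : (0:ℝ) < a := lt_of_lt_of_le one_pos ha1
  have hb0 : (0:ℝ) < b := lt_trans ha0 hab
  have hba : (0:ℝ) < b - a := by linarith
  -- choose the threshold R
  refine ⟨max ((b*b)/(b-a)) ((N+1:ℝ)*b), fun x hx => ?_⟩
  have hx1 : (b*b)/(b-a) ≤ x := le_trans (le_max_left _ _) hx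
  have hx2 : (N+1:ℝ)*b ≤ x := le_trans (le_max_right _ _) hx
  have hx0 : (0:ℝ) < x := by nlinarith
  set n : ℕ := ⌈x/b⌉₊ with hn_def
  have hxb0 : (0:ℝ) ≤ x/b := le_of_lt (div_pos hx0 hb0)
  have hn1 : x/b ≤ (n:ℝ) := Nat.le_ceil _
  have hn2 : (n:ℝ) < x/b + 1 := Nat.ceil_lt_add_one hxb0
  have hnN : N + 1 ≤ n := by
    have h1 : (N+1:ℝ) ≤ x/b := (le_div_iff₀ hb0).mpr hx2
    exact_mod_cast le_trans h1 hn1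
  have hn0 : (0:ℝ) < (n:ℝ) := by
    have : 1 ≤ n := le_trans (Nat.succ_le_succ (Nat.zero_le N)) hnN
    exact_mod_cast this
  have hxnb : x ≤ (n:ℝ) * b := (div_le_iff₀ hb0).mp hn1
  have h3 : b ≤ (n:ℝ) * (b - a) := by
    have h4 : b * b ≤ x * (b - a) := (div_le_iff₀ hba).mp hx1
    nlinarith
  have hna : (n:ℝ) * a ≤ x := by
    have h5 : (n:ℝ) * b < x + b := by
      have := mul_lt_mul_of_pos_right hn2 hb0
      rw [add_mul, div_mul_cancel₀ _ (ne_of_gt hb0), one_mul] at this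
      exact this
    nlinarith
  have hta : a ≤ x / n := (le_div_iff₀ hn0).mpr (by nlinarith [hna])
  have htb : x / n ≤ b := (div_le_iff₀ hn0).mpr (by nlinarith [hxnb])
  have hEmem := hIcc (x / n) hta htb
  have hfx := hEmem.2 n hnN
  rw [mul_div_cancel₀ _ (ne_of_gt hn0)] at hfx
  rw [Real.dist_eq, sub_zero]
  linarith
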